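/- arXiv:cs/0105024 — 12 statements merged into one kernel-verified Lean document; each statement's English description precedes it below -/
import Mathlib

section
/- The rule R_x, which replaces the domain of x by D x ∩ (⋃ over all indices b with b_i ∈ D y_i of D a[b]) in the constraint x = a[y₁,…,yₙ], is sound: every solution of the original CSP is a solution of the transformed CSP and vice versa. -/
open Finset

/-- `v` is a variable of the array constraint `x = a[y₁,…,yₙ]`. -/
def InCon {V α : Type*} {n : ℕ} (x : V) (y : Fin n → V) (valid : Finset (Fin n → α))
    (a : (Fin n → α) → V) (v : V) : Prop :=
  v = x ∨ (∃ i, v = y i) ∨ ∃ b ∈ valid, v = a b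

/-- `σ` is a solution of the array constraint `x = a[y₁,…,yₙ]` with domains `D`:
it respects the domains of the constraint's variables, the selected index is valid,
and `x` equals the selected array variable. -/
def IsSol {V α : Type*} [DecidableEq α] {n : ℕ} (D : V → Finset α) (x : V) (y : Fin n → V)
    (valid : Finset (Fin n → α)) (a : (Fin n → α) → V) (σ : V → α) : Prop :=
  (∀ v, InCon x y valid a v → σ v ∈ D v) ∧
    (fun i => σ (y i)) ∈ valid ∧ σ x = σ (a fun i => σ (y i))

/-- Linearity: all variables occurring in the constraint are pairwise distinct. -/
def Linear {V α : Type*} {n : ℕ} (x : V) (y : Fin n → V) (valid : Finset (Fin n → α))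
    (a : (Fin n → α) → V) : Prop :=
  Function.Injective y ∧
    (∀ b ∈ valid, ∀ b' ∈ valid, a b = a b' → b = b') ∧
    (∀ i, x ≠ y i) ∧ (∀ b ∈ valid, x ≠ a b) ∧ ∀ i, ∀ b ∈ valid, y i ≠ a b

/-- Soundness of rule R_x: replacing `D x` by
`D x ∩ ⋃_{b ∈ valid, ∀ i, b i ∈ D (y i)} D (a b)` preserves the solution set of the
linear constraint `x = a[y₁,…,yₙ]`. -/
theorem stmt2 {V α : Type*} [DecidableEq V] [DecidableEq α] {n : ℕ}
    (D : V → Finset α) (x : V) (y : Fin n → V) (valid : Finset (Fin n → α))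
    (a : (Fin n → α) → V) (hlin : Linear x y valid a) :
    ∀ σ : V → α,
      IsSol D x y valid a σ ↔
        IsSol (Function.update D x
          (D x ∩ (valid.filter (fun b => ∀ i, b i ∈ D (y i))).biUnion fun b => D (a b)))
          x y valid a σ := by
  intro σ
  constructor
  · rintro ⟨hdom, hval, heq⟩
    refine ⟨?_, hval, heq⟩
    intro v hv
    rcases eq_or_ne v x with rfl | hne
    · rw [Function.update_self, Finset.mem_inter]
      refine ⟨hdom v hv, ?_⟩
      rw [Finset.mem_biUnion]
      refine ⟨fun i => σ (y i), ?_, ?_⟩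
      · rw [Finset.mem_filter]
        exact ⟨hval, fun i => hdom (y i) (Or.inr (Or.inl ⟨i, rfl⟩))⟩
      · rw [heq]; exact hdom _ (Or.inr (Or.inr ⟨_, hval, rfl⟩))
    · rw [Function.update_of_ne hne]; exact hdom v hv
  · rintro ⟨hdom, hval, heq⟩
    refine ⟨?_, hval, heq⟩
    intro v hv
    rcases eq_or_ne v x with rfl | hne
    · have := hdom v hv
      rw [Function.update_self, Finset.mem_inter] at this
      exact this.1
    · have := hdom v hv
      rwa [Function.update_of_ne hne] at this
end

section
/- The rule R_y is sound: if D x ∩ (⋃ over all indices b with b_i ∈ D y_i and b_k = b of D a[b]) = ∅, then removing b from D y_k preserves the set of solutions of the constraint x = a[y₁,…,yₙ]. -/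
open Finset

/-- Soundness of rule R_y: if `D x` is disjoint from the union of `D (a b')` over all
valid indices `b'` with `b' i ∈ D (y i)` and `b' k = b`, then removing `b` from
`D (y k)` preserves the solution set of the linear constraint `x = a[y₁,…,yₙ]`. -/
theorem stmt3 {V α : Type*} [DecidableEq V] [DecidableEq α] {n : ℕ}
    (D : V → Finset α) (x : V) (y : Fin n → V) (valid : Finset (Fin n → α))
    (a : (Fin n → α) → V) (hlin : Linear x y valid a)
    (k : Fin n) (b : α)
    (hcond : D x ∩ ((valid.filter fun b' => (∀ i, b' i ∈ D (y i)) ∧ b' k = b).biUnion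
      fun b' => D (a b')) = ∅) :
    ∀ σ : V → α,
      IsSol D x y valid a σ ↔
        IsSol (Function.update D (y k) (D (y k) \ {b})) x y valid a σ := by
  intro σ
  constructor
  · rintro ⟨hdom, hv, hx⟩
    have hσyk : σ (y k) ≠ b := by
      intro hb
      have hmem : (fun i => σ (y i)) ∈ valid.filter
          fun b' => (∀ i, b' i ∈ D (y i)) ∧ b' k = b := by
        simp only [mem_filter]
        exact ⟨hv, fun i => hdom _ (Or.inr (Or.inl ⟨i, rfl⟩)), hb⟩
      have hxD : σ x ∈ D x := hdom _ (Or.inl rfl)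
      have haD : σ (a fun i => σ (y i)) ∈ D (a fun i => σ (y i)) :=
        hdom _ (Or.inr (Or.inr ⟨_, hv, rfl⟩))
      have : σ x ∈ D x ∩ ((valid.filter fun b' => (∀ i, b' i ∈ D (y i)) ∧ b' k = b).biUnion
          fun b' => D (a b')) := by
        rw [mem_inter, mem_biUnion]
        exact ⟨hxD, _, hmem, hx ▸ haD⟩
      rw [hcond] at this
      exact absurd this (notMem_empty _)
    refine ⟨fun v hvc => ?_, hv, hx⟩
    by_cases hvy : v = y k
    · subst hvy
      rw [Function.update_self, mem_sdiff, mem_singleton]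
      exact ⟨hdom _ hvc, hσyk⟩
    · rw [Function.update_of_ne hvy]
      exact hdom _ hvc
  · rintro ⟨hdom, hv, hx⟩
    refine ⟨fun v hvc => ?_, hv, hx⟩
    have := hdom v hvc
    by_cases hvy : v = y k
    · subst hvy
      rw [Function.update_self, mem_sdiff] at this
      exact this.1
    · rwa [Function.update_of_ne hvy] at this
end

section
/- The rule R_a is sound: if the product of the index domains D y₁ × … × D yₙ equals the singleton {(b₁,…,bₙ)}, then replacing the domain of a[b₁,…,bₙ] by D a[b] ∩ D x preserves the set of solutions of the constraint x = a[y₁,…,yₙ]. -/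
open Finset

/-- Soundness of rule R_a: if every index domain `D (y i)` is the singleton `{b i}`
(so the index-domain product is `{b}`), then replacing the domain of `a b` by
`D (a b) ∩ D x` preserves the solution set of the linear constraint `x = a[y₁,…,yₙ]`. -/
theorem stmt4 {V α : Type*} [DecidableEq V] [DecidableEq α] {n : ℕ}
    (D : V → Finset α) (x : V) (y : Fin n → V) (valid : Finset (Fin n → α))
    (a : (Fin n → α) → V) (hlin : Linear x y valid a)
    (b : Fin n → α) (hb : b ∈ valid) (hsing : ∀ i, D (y i) = {b i}) :
    ∀ σ : V → α,
      IsSol D x y valid a σ ↔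
        IsSol (Function.update D (a b) (D (a b) ∩ D x)) x y valid a σ := by
  intro σ
  constructor
  · rintro ⟨hdom, hval, heq⟩
    have hy : ∀ i, σ (y i) = b i := by
      intro i
      have := hdom (y i) (Or.inr (Or.inl ⟨i, rfl⟩))
      rw [hsing i, Finset.mem_singleton] at this
      exact this
    have hfun : (fun i => σ (y i)) = b := funext hy
    refine ⟨?_, hval, heq⟩
    intro v hv
    by_cases hvab : v = a b
    · subst hvab
      rw [Function.update_self, Finset.mem_inter]
      refine ⟨hdom _ hv, ?_⟩
      have hx := hdom x (Or.inl rfl)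
      rw [heq, hfun] at hx
      exact hx
    · rw [Function.update_of_ne hvab]
      exact hdom v hv
  · rintro ⟨hdom, hval, heq⟩
    refine ⟨?_, hval, heq⟩
    intro v hv
    have := hdom v hv
    by_cases hvab : v = a b
    · subst hvab
      rw [Function.update_self, Finset.mem_inter] at this
      exact this.1
    · rwa [Function.update_of_ne hvab] at this
end

section
/- Suppose the satisfiable linear constraint x = a[y₁,…,yₙ] is closed under rule R_x (i.e., D x ⊆ ⋃_{b_i ∈ D y_i} D a[b]). Then every value d ∈ D x is supported: there exists a solution σ of the constraint with σ x = d. -/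
open Finset

/-- If the satisfiable linear constraint `x = a[y₁,…,yₙ]` is closed under rule R_x
(`D x` is contained in the union of `D (a b)` over valid indices `b` with
`b i ∈ D (y i)`), then every `d ∈ D x` is supported by a solution `σ` with `σ x = d`. -/
theorem stmt5 {V α : Type*} [DecidableEq V] [DecidableEq α] {n : ℕ}
    (D : V → Finset α) (x : V) (y : Fin n → V) (valid : Finset (Fin n → α))
    (a : (Fin n → α) → V) (hlin : Linear x y valid a)
    (hsat : ∃ σ, IsSol D x y valid a σ)
    (hclosed : ∀ d ∈ D x, ∃ b ∈ valid, (∀ i, b i ∈ D (y i)) ∧ d ∈ D (a b)) :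
    ∀ d ∈ D x, ∃ σ, IsSol D x y valid a σ ∧ σ x = d := by
  classical
  intro d hd
  obtain ⟨σ₀, hσ₀⟩ := hsat
  obtain ⟨b, hbv, hby, hdb⟩ := hclosed d hd
  obtain ⟨hyinj, hainj, hxy, hxa, hya⟩ := hlin
  set σ : V → α := fun v =>
    if h : ∃ i, v = y i then b h.choose
    else if v = x ∨ v = a b then d else σ₀ v with hσ
  have hσy : ∀ i, σ (y i) = b i := by
    intro i
    have h : ∃ j, y i = y j := ⟨i, rfl⟩
    have : y i = y h.choose := h.choose_spec
    simp only [hσ, dif_pos h]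
    exact congrArg b (hyinj this).symm
  have hσx : σ x = d := by
    have h : ¬ ∃ i, x = y i := by rintro ⟨i, hi⟩; exact hxy i hi
    simp [hσ, h]
  have hσab : σ (a b) = d := by
    have h : ¬ ∃ i, a b = y i := by rintro ⟨i, hi⟩; exact hya i b hbv hi.symm
    simp [hσ, h]
  refine ⟨σ, ⟨?_, ?_, ?_⟩, hσx⟩
  · rintro v (rfl | ⟨i, rfl⟩ | ⟨b', hb'v, rfl⟩)
    · rw [hσx]; exact hd
    · rw [hσy]; exact hby i
    · by_cases hbb : a b' = a b
      · rw [hbb, hσab, ← hbb]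
        have := hainj b' hb'v b hbv hbb
        rw [this] at hbb ⊢
        exact hdb
      · have h1 : ¬ ∃ i, a b' = y i := by rintro ⟨i, hi⟩; exact hya i b' hb'v hi.symm
        have h2 : ¬ (a b' = x ∨ a b' = a b) := by
          rintro (h | h); exacts [hxa b' hb'v h.symm, hbb h]
        simp only [hσ, dif_neg h1, if_neg h2]
        exact hσ₀.1 _ (Or.inr (Or.inr ⟨b', hb'v, rfl⟩))
  · have : (fun i => σ (y i)) = b := funext hσy
    rw [this]; exact hbv
  · have : (fun i => σ (y i)) = b := funext hσy
    rw [this, hσx, hσab]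
end

section
/- Suppose the linear constraint x = a[y₁,…,yₙ] is closed under rule R_y, i.e., for every k and every b ∈ D y_k we have D x ∩ (⋃ over indices b' with b'_i ∈ D y_i and b'_k = b of D a[b']) ≠ ∅. Then every value b ∈ D y_k is supported by a solution of the constraint. -/
open Finset

/-- If the linear constraint `x = a[y₁,…,yₙ]` over nonempty domains is closed under
rule R_y (for every `k` and `b ∈ D (y k)` there is a valid index `b'` with
`b' i ∈ D (y i)`, `b' k = b` and `D x ∩ D (a b') ≠ ∅`), then every value
`b ∈ D (y k)` is supported by a solution. -/
theorem stmt6 {V α : Type*} [DecidableEq V] [DecidableEq α] {n : ℕ}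
    (D : V → Finset α) (x : V) (y : Fin n → V) (valid : Finset (Fin n → α))
    (a : (Fin n → α) → V) (hlin : Linear x y valid a)
    (hne : ∀ v : V, (D v).Nonempty)
    (hclosed : ∀ k : Fin n, ∀ b ∈ D (y k), ∃ b' ∈ valid,
      (∀ i, b' i ∈ D (y i)) ∧ b' k = b ∧ (D x ∩ D (a b')).Nonempty) :
    ∀ k : Fin n, ∀ b ∈ D (y k), ∃ σ, IsSol D x y valid a σ ∧ σ (y k) = b := by

  intro k b hb
  obtain ⟨b', hb'v, hb'D, hb'k, c, hc⟩ := hclosed k b hb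
  simp only [mem_inter] at hc
  obtain ⟨hyinj, hainj, hxy, hxa, hya⟩ := hlin
  classical
  set σ : V → α := fun v =>
    if h : ∃ i, v = y i then b' h.choose
    else if v = x then c
    else if v = a b' then c
    else (hne v).choose with hσ
  have hσy : ∀ i, σ (y i) = b' i := by
    intro i
    have h : ∃ j, y i = y j := ⟨i, rfl⟩
    simp only [hσ, dif_pos h]
    congr 1
    exact (hyinj h.choose_spec).symm
  have hσx : σ x = c := by
    have h : ¬ ∃ i, x = y i := by rintro ⟨i, hi⟩; exact hxy i hi
    simp only [hσ, dif_neg h]; simp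
  have hσa : σ (a b') = c := by
    have h1 : ¬ ∃ i, a b' = y i := by rintro ⟨i, hi⟩; exact hya i b' hb'v hi.symm
    have h2 : a b' ≠ x := fun h => hxa b' hb'v h.symm
    simp only [hσ, dif_neg h1, if_neg h2]; simp
  have hval : (fun i => σ (y i)) ∈ valid := by
    have : (fun i => σ (y i)) = b' := funext hσy
    rw [this]; exact hb'v
  refine ⟨σ, ⟨?_, hval, ?_⟩, by rw [hσy k]; exact hb'k⟩
  · rintro v (rfl | ⟨i, rfl⟩ | ⟨b'', hb''v, rfl⟩)
    · rw [hσx]; exact hc.1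
    · rw [hσy i]; exact hb'D i
    · have h1 : ¬ ∃ i, a b'' = y i := by rintro ⟨i, hi⟩; exact hya i b'' hb''v hi.symm
      have h2 : a b'' ≠ x := fun h => hxa b'' hb''v h.symm
      by_cases h3 : a b'' = a b'
      · rw [h3, hσa]; exact hc.2
      · simp only [hσ, dif_neg h1, if_neg h2, if_neg h3]
        exact (hne (a b'')).choose_spec
  · have : (fun i => σ (y i)) = b' := funext hσy
    rw [this, hσx, hσa]
end

section
/- If the satisfiable linear constraint x = a[y₁,…,yₙ] is closed under all three rules R_x, R_y, R_a, then it is arc-consistent: every value in the domain of every variable of the constraint (x, each y_i, and each array variable a[b]) is part of some solution. -/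
open Finset

/-- Build a solution with prescribed values at `x`, the `y i`, and one array variable. -/
lemma build {V α : Type*} [DecidableEq V] [DecidableEq α] {n : ℕ}
    (D : V → Finset α) (x : V) (y : Fin n → V) (valid : Finset (Fin n → α))
    (a : (Fin n → α) → V) (hlin : Linear x y valid a)
    (σ₀ : V → α) (h₀ : IsSol D x y valid a σ₀)
    (β : Fin n → α) (hβv : β ∈ valid) (hβD : ∀ i, β i ∈ D (y i))
    (e : α) (hex : e ∈ D x) (hea : e ∈ D (a β))
    (b : Fin n → α) (hbv : b ∈ valid) (d : α) (hd : d ∈ D (a b))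
    (hcomp : b = β → d = e) :
    ∃ σ, IsSol D x y valid a σ ∧ σ x = e ∧ (∀ i, σ (y i) = β i) ∧ σ (a b) = d := by
  obtain ⟨hyinj, hainj, hxy, hxa, hya⟩ := hlin
  set σ : V → α := fun v =>
    if v = x then e
    else if h : ∃ i, v = y i then β h.choose
    else if v = a β then e
    else if v = a b then d
    else σ₀ v with hσ
  have hσx : σ x = e := by simp [hσ]
  have hσy : ∀ i, σ (y i) = β i := by
    intro i
    have h1 : ¬ (y i = x) := fun h => hxy i h.symm
    have h2 : ∃ j, y i = y j := ⟨i, rfl⟩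
    simp only [hσ, h1, if_false, dif_pos h2]
    exact congrArg β (hyinj h2.choose_spec).symm
  have hσa : ∀ b', b' ∈ valid → (b' = β → σ (a b') = e) ∧ (b' ≠ β → b' = b → σ (a b') = d)
      ∧ (b' ≠ β → b' ≠ b → σ (a b') = σ₀ (a b')) := by
    intro b' hb'
    have h1 : ¬ (a b' = x) := fun h => hxa b' hb' h.symm
    have h2 : ¬ ∃ i, a b' = y i := fun ⟨i, h⟩ => hya i b' hb' h.symm
    refine ⟨fun h => ?_, fun h h' => ?_, fun h h' => ?_⟩
    · show (if a b' = x then e else if h : ∃ i, a b' = y i then β h.choose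
        else if a b' = a β then e else if a b' = a b then d else σ₀ (a b')) = e
      rw [if_neg h1, dif_neg h2, if_pos (congrArg a h)]
    · have hne : a b' ≠ a β := fun hh => h (hainj b' hb' β hβv hh)
      show (if a b' = x then e else if h : ∃ i, a b' = y i then β h.choose
        else if a b' = a β then e else if a b' = a b then d else σ₀ (a b')) = d
      rw [if_neg h1, dif_neg h2, if_neg hne, if_pos (congrArg a h')]
    · have hne : a b' ≠ a β := fun hh => h (hainj b' hb' β hβv hh)
      have hne2 : a b' ≠ a b := fun hh => h' (hainj b' hb' b hbv hh)
      show (if a b' = x then e else if h : ∃ i, a b' = y i then β h.choose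
        else if a b' = a β then e else if a b' = a b then d else σ₀ (a b')) = σ₀ (a b')
      rw [if_neg h1, dif_neg h2, if_neg hne, if_neg hne2]
  have hσab : σ (a b) = d := by
    by_cases h : b = β
    · rw [(hσa b hbv).1 h, hcomp h]
    · exact (hσa b hbv).2.1 h rfl
  have hσaβ : σ (a β) = e := (hσa β hβv).1 rfl
  have hsel : (fun i => σ (y i)) = β := funext hσy
  refine ⟨σ, ⟨?_, ?_, ?_⟩, hσx, hσy, hσab⟩
  · rintro v (rfl | ⟨i, rfl⟩ | ⟨b', hb', rfl⟩)
    · rw [hσx]; exact hex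
    · rw [hσy]; exact hβD i
    · by_cases h : b' = β
      · rw [(hσa b' hb').1 h, h]; exact hea
      · by_cases h' : b' = b
        · rw [(hσa b' hb').2.1 h h', h']; exact hd
        · rw [(hσa b' hb').2.2 h h']
          exact h₀.1 _ (Or.inr (Or.inr ⟨b', hb', rfl⟩))
  · rw [hsel]; exact hβv
  · rw [hsel, hσx, hσaβ]

/-- If the satisfiable linear constraint `x = a[y₁,…,yₙ]` is closed under the three
rules R_x, R_y and R_a, then it is arc-consistent: every value in the domain of every
variable of the constraint is part of some solution. -/
theorem stmt7 {V α : Type*} [DecidableEq V] [DecidableEq α] {n : ℕ}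
    (D : V → Finset α) (x : V) (y : Fin n → V) (valid : Finset (Fin n → α))
    (a : (Fin n → α) → V) (hlin : Linear x y valid a)
    (hsat : ∃ σ, IsSol D x y valid a σ)
    (hRx : ∀ d ∈ D x, ∃ b ∈ valid, (∀ i, b i ∈ D (y i)) ∧ d ∈ D (a b))
    (hRy : ∀ k : Fin n, ∀ b ∈ D (y k), ∃ b' ∈ valid,
      (∀ i, b' i ∈ D (y i)) ∧ b' k = b ∧ (D x ∩ D (a b')).Nonempty)
    (hRa : ∀ b : Fin n → α, b ∈ valid → (∀ i, D (y i) = {b i}) → D (a b) ⊆ D x) :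
    ∀ v : V, InCon x y valid a v → ∀ d ∈ D v,
      ∃ σ, IsSol D x y valid a σ ∧ σ v = d := by
  obtain ⟨σ₀, h₀⟩ := hsat
  rintro v (hv | ⟨k, hv⟩ | ⟨b, hbv, hv⟩) d hd <;> rw [hv] at hd ⊢
  · obtain ⟨β, hβv, hβD, hdβ⟩ := hRx d hd
    obtain ⟨σ, hσ, hσx, -, -⟩ :=
      build D x y valid a hlin σ₀ h₀ β hβv hβD d hd hdβ β hβv d hdβ (fun _ => rfl)
    exact ⟨σ, hσ, hσx⟩
  · obtain ⟨β, hβv, hβD, hβk, e, he⟩ := hRy k d hd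
    rw [mem_inter] at he
    obtain ⟨σ, hσ, -, hσy, -⟩ :=
      build D x y valid a hlin σ₀ h₀ β hβv hβD e he.1 he.2 β hβv e he.2 (fun _ => rfl)
    exact ⟨σ, hσ, by rw [hσy k, hβk]⟩
  · by_cases hsing : ∀ i, D (y i) = {b i}
    · have hbD : ∀ i, b i ∈ D (y i) := fun i => by rw [hsing i]; exact mem_singleton_self _
      have hdx : d ∈ D x := hRa b hbv hsing hd
      obtain ⟨σ, hσ, -, -, hσab⟩ :=
        build D x y valid a hlin σ₀ h₀ b hbv hbD d hdx hd b hbv d hd (fun _ => rfl)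
      exact ⟨σ, hσ, hσab⟩
    · push_neg at hsing
      obtain ⟨i, hi⟩ := hsing
      have hne : D (y i) ≠ {b i} := hi
      have : ∃ c ∈ D (y i), c ≠ b i := by
        by_contra hc
        push_neg at hc
        apply hne
        apply Finset.eq_singleton_iff_nonempty_unique_mem.mpr
        refine ⟨⟨σ₀ (y i), h₀.1 _ (Or.inr (Or.inl ⟨i, rfl⟩))⟩, hc⟩
      obtain ⟨c, hc, hcne⟩ := this
      obtain ⟨β, hβv, hβD, hβi, e, he⟩ := hRy i c hc
      rw [mem_inter] at he
      have hbβ : b ≠ β := fun h => hcne (by rw [h, hβi])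
      obtain ⟨σ, hσ, -, -, hσab⟩ :=
        build D x y valid a hlin σ₀ h₀ β hβv hβD e he.1 he.2 b hbv d hd
          (fun h => absurd h hbβ)
      exact ⟨σ, hσ, hσab⟩
end

section
/- If the side condition of rule R_y holds for some k and b ∈ D y_k, i.e., D x ∩ D a[b'] = ∅ for every index b' with b'_i ∈ D y_i and b'_k = b, then no solution of the constraint x = a[y₁,…,yₙ] assigns b to y_k. -/
open Finset

/-- If the side condition of rule R_y holds for `k` and `b ∈ D (y k)` — `D x` is
disjoint from `D (a b')` for every valid index `b'` with `b' i ∈ D (y i)` and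
`b' k = b` — then no solution of `x = a[y₁,…,yₙ]` assigns `b` to `y k`. -/
theorem stmt10 {V α : Type*} [DecidableEq V] [DecidableEq α] {n : ℕ}
    (D : V → Finset α) (x : V) (y : Fin n → V) (valid : Finset (Fin n → α))
    (a : (Fin n → α) → V) (hlin : Linear x y valid a)
    (k : Fin n) (b : α) (hb : b ∈ D (y k))
    (hcond : ∀ b' ∈ valid, (∀ i, b' i ∈ D (y i)) → b' k = b → D x ∩ D (a b') = ∅) :
    ¬ ∃ σ, IsSol D x y valid a σ ∧ σ (y k) = b := by
  rintro ⟨σ, ⟨hdom, hvalid, hx⟩, hk⟩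
  have h1 : D x ∩ D (a fun i => σ (y i)) = ∅ := by
    apply hcond _ hvalid
    · intro i; exact hdom _ (Or.inr (Or.inl ⟨i, rfl⟩))
    · exact hk
  have hx1 : σ x ∈ D x := hdom _ (Or.inl rfl)
  have hx2 : σ x ∈ D (a fun i => σ (y i)) := by
    rw [hx]; exact hdom _ (Or.inr (Or.inr ⟨_, hvalid, rfl⟩))
  have : σ x ∈ D x ∩ D (a fun i => σ (y i)) := Finset.mem_inter.2 ⟨hx1, hx2⟩
  simp [h1] at this
end

section
/- If D y₁ × … × D yₙ = {(b₁,…,bₙ)} and d ∈ D a[b] with d ∉ D x, then no solution of the constraint x = a[y₁,…,yₙ] assigns d to a[b₁,…,bₙ]. -/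
open Finset

/-- If every index domain is the singleton `{b i}` and `d ∈ D (a b)` with `d ∉ D x`,
then no solution of `x = a[y₁,…,yₙ]` assigns `d` to the array variable `a b`. -/
theorem stmt11 {V α : Type*} [DecidableEq V] [DecidableEq α] {n : ℕ}
    (D : V → Finset α) (x : V) (y : Fin n → V) (valid : Finset (Fin n → α))
    (a : (Fin n → α) → V) (hlin : Linear x y valid a)
    (b : Fin n → α) (hb : b ∈ valid) (hsing : ∀ i, D (y i) = {b i})
    (d : α) (hd : d ∈ D (a b)) (hdx : d ∉ D x) :
    ¬ ∃ σ, IsSol D x y valid a σ ∧ σ (a b) = d := by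
  rintro ⟨σ, ⟨hdom, hval, hx⟩, hσ⟩
  have hy : (fun i => σ (y i)) = b := by
    funext i
    have := hdom (y i) (Or.inr (Or.inl ⟨i, rfl⟩))
    rw [hsing i, Finset.mem_singleton] at this
    exact this
  rw [hy] at hx
  have hxmem : σ x ∈ D x := hdom x (Or.inl rfl)
  rw [hx, hσ] at hxmem
  exact hdx hxmem
end

section
/- Decomposition preserves arc-consistency: let C_t be a constraint on a variable set containing v expressing s = t(v), and C_v a constraint expressing v = r, such that the variable sets of C_t and C_v intersect only in {v}. If C_t and C_v are both arc-consistent and agree on support for v (each value of D v supported in both), then the composed constraint C, defined as the join of C_t and C_v projected onto the variables other than v with v eliminated by identification, is arc-consistent. -/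
/-- Decomposition preserves arc-consistency: if `Ct` (over variables `Vt`) and
`Cv` (over variables `Vv`) share exactly the variable `v`, each constraint depends
only on its own variables and respects the domains, both are arc-consistent and agree
on support for `v`, then their join `Ct ∩ Cv` (the composed constraint `C`) is
arc-consistent on `Vt ∪ Vv`. -/
theorem stmt13 {V α : Type*} (D : V → Finset α)
    (Vt Vv : Set V) (v : V) (hvt : v ∈ Vt) (hvv : v ∈ Vv)
    (hint : Vt ∩ Vv = {v})
    (Ct Cv : Set (V → α))
    (hlocT : ∀ σ τ : V → α, (∀ w ∈ Vt, σ w = τ w) → σ ∈ Ct → τ ∈ Ct)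
    (hlocV : ∀ σ τ : V → α, (∀ w ∈ Vv, σ w = τ w) → σ ∈ Cv → τ ∈ Cv)
    (hdomT : ∀ σ ∈ Ct, ∀ w ∈ Vt, σ w ∈ D w)
    (hdomV : ∀ σ ∈ Cv, ∀ w ∈ Vv, σ w ∈ D w)
    (hacT : ∀ w ∈ Vt, ∀ d ∈ D w, ∃ σ ∈ Ct, σ w = d)
    (hacV : ∀ w ∈ Vv, ∀ d ∈ D w, ∃ σ ∈ Cv, σ w = d)
    (hagree : ∀ d ∈ D v, (∃ σ ∈ Ct, σ v = d) ∧ ∃ σ ∈ Cv, σ v = d) :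
    ∀ w ∈ Vt ∪ Vv, ∀ d ∈ D w, ∃ σ ∈ Ct ∩ Cv, σ w = d := by
  classical
  intro w hw d hd
  rcases hw with hw | hw
  · obtain ⟨σ, hσ, hσw⟩ := hacT w hw d hd
    have hσv : σ v ∈ D v := hdomT σ hσ v hvt
    obtain ⟨τ, hτ, hτv⟩ := hacV v hvv (σ v) hσv
    refine ⟨fun x => if x ∈ Vt then σ x else τ x, ⟨?_, ?_⟩, by simp [hw, hσw]⟩
    · exact hlocT σ _ (fun x hx => by simp [hx]) hσ
    · refine hlocV τ _ (fun x hx => ?_) hτ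
      by_cases hxt : x ∈ Vt
      · have : x = v := by
          have : x ∈ Vt ∩ Vv := ⟨hxt, hx⟩
          rwa [hint] at this
        simp [hxt, this, hτv]
      · simp [hxt]
  · obtain ⟨τ, hτ, hτw⟩ := hacV w hw d hd
    have hτv : τ v ∈ D v := hdomV τ hτ v hvv
    obtain ⟨σ, hσ, hσv⟩ := hacT v hvt (τ v) hτv
    refine ⟨fun x => if x ∈ Vv then τ x else σ x, ⟨?_, ?_⟩, by simp [hw, hτw]⟩
    · refine hlocT σ _ (fun x hx => ?_) hσ
      by_cases hxv : x ∈ Vv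
      · have : x = v := by
          have : x ∈ Vt ∩ Vv := ⟨hx, hxv⟩
          rwa [hint] at this
        simp [hxv, this, hσv]
      · simp [hxv]
    · exact hlocV τ _ (fun x hx => by simp [hx]) hτ
end

section
/- In the ARRAC algorithm setting: if for some index b ∈ D y₁ × … × D yₙ the set T = D x ∩ D a[b] is nonempty, then every element of T is supported for x, and for every coordinate k the value b_k is supported for y_k, by the solution assigning y_i ↦ b_i, x ↦ d, a[b] ↦ d for any d ∈ T (and any domain-respecting values to the remaining array variables, assuming all other array variable domains are nonempty). -/
open Finset

/-- ARRAC support detection: if for a valid index `b` in the index-domain product the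
set `T = D x ∩ D (a b)` is nonempty, then (domains being nonempty) every `d ∈ T` is
supported for `x` and every `b k` is supported for `y k`, by a solution assigning
`y i ↦ b i`, `x ↦ d` and `a b ↦ d`. -/
theorem stmt16 {V α : Type*} [DecidableEq V] [DecidableEq α] {n : ℕ}
    (D : V → Finset α) (x : V) (y : Fin n → V) (valid : Finset (Fin n → α))
    (a : (Fin n → α) → V) (hlin : Linear x y valid a)
    (hne : ∀ v : V, (D v).Nonempty)
    (b : Fin n → α) (hb : b ∈ valid) (hbD : ∀ i, b i ∈ D (y i)) :
    ∀ d ∈ D x ∩ D (a b),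
      ∃ σ, IsSol D x y valid a σ ∧ σ x = d ∧ σ (a b) = d ∧ ∀ i, σ (y i) = b i := by
  classical
  obtain ⟨hyinj, hainj, hxy, hxa, hya⟩ := hlin
  intro d hd
  rw [Finset.mem_inter] at hd
  set σ : V → α := fun v =>
    if v = x ∨ v = a b then d
    else if h : ∃ i, v = y i then b h.choose
    else (hne v).choose with hσ
  have hσx : σ x = d := by simp [hσ]
  have hσa : σ (a b) = d := by simp [hσ]
  have hσy : ∀ i, σ (y i) = b i := by
    intro i
    have h1 : ¬ (y i = x ∨ y i = a b) := by
      push_neg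
      exact ⟨(hxy i).symm, hya i b hb⟩
    have h2 : ∃ j, y i = y j := ⟨i, rfl⟩
    simp only [hσ, h1, if_false, dif_pos h2]
    have := hyinj h2.choose_spec
    rw [← this]
  have hvalid : (fun i => σ (y i)) ∈ valid := by
    have : (fun i => σ (y i)) = b := funext hσy
    rw [this]; exact hb
  refine ⟨σ, ⟨?_, ?_, ?_⟩, hσx, hσa, hσy⟩
  · intro v hv
    rcases hv with rfl | ⟨i, rfl⟩ | ⟨b', hb', rfl⟩
    · rw [hσx]; exact hd.1
    · rw [hσy i]; exact hbD i
    · by_cases hab : a b' = a b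
      · rw [hab, hσa]; exact hab ▸ hd.2
      · have h1 : ¬ (a b' = x ∨ a b' = a b) := by
          push_neg
          exact ⟨fun h => hxa b' hb' h.symm, hab⟩
        have h2 : ¬ ∃ i, a b' = y i := by
          rintro ⟨i, hi⟩
          exact hya i b' hb' hi.symm
        simp only [hσ, h1, if_false, dif_neg h2]
        exact (hne (a b')).choose_spec
  · exact hvalid
  · have : (fun i => σ (y i)) = b := funext hσy
    rw [this, hσx, hσa]
end

section
/- Unsupported index values are exactly those removed by R_y: in the linear constraint x = a[y₁,…,yₙ] with all array variable domains nonempty and D x nonempty, a value b ∈ D y_k is supported by some solution if and only if there exists an index b' ∈ ∏ D y_i with b'_k = b and D x ∩ D a[b'] ≠ ∅. -/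
open Finset

/-- Unsupported index values are exactly those removed by R_y: over nonempty domains,
a value `b ∈ D (y k)` is supported by a solution of the linear constraint
`x = a[y₁,…,yₙ]` iff there is a valid index `b'` in the index-domain product with
`b' k = b` and `D x ∩ D (a b') ≠ ∅`. -/
theorem stmt18 {V α : Type*} [DecidableEq V] [DecidableEq α] {n : ℕ}
    (D : V → Finset α) (x : V) (y : Fin n → V) (valid : Finset (Fin n → α))
    (a : (Fin n → α) → V) (hlin : Linear x y valid a)
    (hne : ∀ v : V, (D v).Nonempty)
    (k : Fin n) (b : α) (hb : b ∈ D (y k)) :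
    (∃ σ, IsSol D x y valid a σ ∧ σ (y k) = b) ↔
      ∃ b' ∈ valid, (∀ i, b' i ∈ D (y i)) ∧ b' k = b ∧ (D x ∩ D (a b')).Nonempty := by
  classical
  obtain ⟨hyinj, hainj, hxy, hxa, hya⟩ := hlin
  constructor
  · rintro ⟨σ, ⟨hdom, hval, heq⟩, hσk⟩
    refine ⟨fun i => σ (y i), hval, fun i => hdom (y i) (Or.inr (Or.inl ⟨i, rfl⟩)), hσk, ?_⟩
    exact ⟨σ x, Finset.mem_inter.2 ⟨hdom x (Or.inl rfl),
      heq ▸ hdom _ (Or.inr (Or.inr ⟨_, hval, rfl⟩))⟩⟩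
  · rintro ⟨b', hb'v, hb'D, hb'k, c, hc⟩
    rw [Finset.mem_inter] at hc
    set σ : V → α := fun v =>
      if h : ∃ i, v = y i then b' h.choose
      else if v = x ∨ v = a b' then c else (hne v).choose with hσ
    have hσy : ∀ i, σ (y i) = b' i := by
      intro i
      have h : ∃ j, y i = y j := ⟨i, rfl⟩
      simp only [hσ, dif_pos h]
      exact congrArg b' (hyinj h.choose_spec).symm
    have hσx : σ x = c := by
      have h : ¬∃ i, x = y i := by rintro ⟨i, hi⟩; exact hxy i hi
      simp [hσ, dif_neg h]
    have hσab' : σ (a b') = c := by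
      have h : ¬∃ i, a b' = y i := by
        rintro ⟨i, hi⟩; exact hya i b' hb'v hi.symm
      have h2 : ¬ a b' = x := fun h2 => hxa b' hb'v h2.symm
      simp [hσ, dif_neg h, h2]
    refine ⟨σ, ⟨?_, ?_, ?_⟩, by rw [hσy]; exact hb'k⟩
    · rintro v (rfl | ⟨i, rfl⟩ | ⟨b'', hb'', rfl⟩)
      · rw [hσx]; exact hc.1
      · rw [hσy]; exact hb'D i
      · by_cases hvb : a b'' = a b'
        · rw [hvb, hσab']; exact hc.2
        · have h : ¬∃ i, a b'' = y i := by
            rintro ⟨i, hi⟩; exact hya i b'' hb'' hi.symm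
          have h2 : ¬ a b'' = x := fun h2 => hxa b'' hb'' h2.symm
          have h3 : ¬(a b'' = x ∨ a b'' = a b') := by tauto
          simp only [hσ, dif_neg h, if_neg h3]
          exact (hne _).choose_spec
    · have : (fun i => σ (y i)) = b' := funext hσy
      rw [this]; exact hb'v
    · have : (fun i => σ (y i)) = b' := funext hσy
      rw [this, hσx, hσab']
end

section
/- A value d ∈ D a[b] for an index b outside the current index-domain product ∏ D y_i is supported whenever the constraint is satisfiable: if the linear constraint x = a[y₁,…,yₙ] has some solution and b ∉ D y₁ × … × D yₙ, then for every d ∈ D a[b] there is a solution assigning d to a[b]. -/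
open Finset

/-- Values of array variables outside the current index-domain product are supported
whenever the constraint is satisfiable: if `b` is a valid index not in
`D y₁ × … × D yₙ` and the linear constraint `x = a[y₁,…,yₙ]` has a solution, then for
every `d ∈ D (a b)` there is a solution assigning `d` to `a b`. -/
theorem stmt19 {V α : Type*} [DecidableEq V] [DecidableEq α] {n : ℕ}
    (D : V → Finset α) (x : V) (y : Fin n → V) (valid : Finset (Fin n → α))
    (a : (Fin n → α) → V) (hlin : Linear x y valid a)
    (hsat : ∃ σ, IsSol D x y valid a σ)
    (b : Fin n → α) (hb : b ∈ valid) (hout : ¬ ∀ i, b i ∈ D (y i)) :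
    ∀ d ∈ D (a b), ∃ σ, IsSol D x y valid a σ ∧ σ (a b) = d := by
  intro d hd
  obtain ⟨σ, hdom, hvalid, heq⟩ := hsat
  obtain ⟨hyinj, hainj, hxy, hxa, hya⟩ := hlin
  refine ⟨Function.update σ (a b) d, ⟨?_, ?_, ?_⟩, Function.update_self _ _ _⟩
  · intro v hv
    by_cases hvab : v = a b
    · subst hvab; simpa using hd
    · rw [Function.update_of_ne hvab]; exact hdom v hv
  · have : ∀ i, Function.update σ (a b) d (y i) = σ (y i) := fun i =>
      Function.update_of_ne (hya i b hb) _ _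
    simpa [this] using hvalid
  · have hy : ∀ i, Function.update σ (a b) d (y i) = σ (y i) := fun i =>
      Function.update_of_ne (hya i b hb) _ _
    have hx : Function.update σ (a b) d x = σ x := Function.update_of_ne (hxa b hb) _ _
    have hsel : a (fun i => σ (y i)) ≠ a b := by
      intro h
      have hbeq : (fun i => σ (y i)) = b := hainj _ hvalid _ hb h
      exact hout fun i => by
        have := hdom (y i) (Or.inr (Or.inl ⟨i, rfl⟩))
        rw [← congrFun hbeq i]; exact this
    have hfun : (fun i => Function.update σ (a b) d (y i)) = fun i => σ (y i) := funext hy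
    rw [hx, hfun, Function.update_of_ne hsel]
    exact heq
end
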